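/- If A ⊆ 𝒞 equals 𝒞 ∩ ⋃_n ([v_n] ∩ A_{𝒞,h_n}) for computable sequences of finite sequences v_n and computable orders h_n, then A is semi-decidable from 𝒞-indices: there is a partial computable function that, given i, halts iff f_i ∈ A. -/

import Mathlib

/-- `f` extends the finite sequence `v`. -/
def Extends (f : ℕ → ℕ) (v : List ℕ) : Prop := ∀ j, ∀ _h : j < v.length, f j = v.getD j 0

/-- prefix `f↾n = (f 0, …, f (n-1))`. -/
def pref (f : ℕ → ℕ) (n : ℕ) : List ℕ := (List.range n).map f

/-- `K_𝒞` of a finite sequence, where `𝒞 = {F i : i ∈ ℕ}`. -/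
noncomputable def KCv (F : ℕ → ℕ → ℕ) (v : List ℕ) : ℕ∞ :=
  sInf ((fun i : ℕ => (i : ℕ∞)) '' {i | Extends (F i) v})

/-- `K_𝒞` of a function. -/
noncomputable def KCf (F : ℕ → ℕ → ℕ) (f : ℕ → ℕ) : ℕ∞ :=
  sInf ((fun i : ℕ => (i : ℕ∞)) '' {i | F i = f})

/- ## Auxiliary boolean machinery -/

lemma recAll (p : ℕ → Bool) :
    ∀ c : ℕ, (Nat.rec true (fun q acc => acc && p q) c : Bool) = true ↔ ∀ q < c, p q = true := by
  intro c
  induction c with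
  | zero => simp
  | succ c ih =>
      rw [show (Nat.rec true (fun q acc => acc && p q) (c + 1) : Bool)
          = ((Nat.rec true (fun q acc => acc && p q) c : Bool) && p c) from rfl,
        Bool.and_eq_true, ih]
      constructor
      · rintro ⟨h1, h2⟩ q hq
        rcases Nat.lt_succ_iff_lt_or_eq.1 hq with hq | rfl
        · exact h1 q hq
        · exact h2
      · intro hall
        exact ⟨fun q hq => hall q (hq.trans (Nat.lt_succ_self c)), hall c (Nat.lt_succ_self c)⟩

lemma recAny (p : ℕ → Bool) :
    ∀ c : ℕ, (Nat.rec false (fun q acc => acc || p q) c : Bool) = true ↔ ∃ q < c, p q = true := by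
  intro c
  induction c with
  | zero => simp
  | succ c ih =>
      rw [show (Nat.rec false (fun q acc => acc || p q) (c + 1) : Bool)
          = ((Nat.rec false (fun q acc => acc || p q) c : Bool) || p c) from rfl,
        Bool.or_eq_true, ih]
      constructor
      · rintro (⟨q, hq, hpq⟩ | h2)
        · exact ⟨q, hq.trans (Nat.lt_succ_self c), hpq⟩
        · exact ⟨c, Nat.lt_succ_self c, h2⟩
      · rintro ⟨q, hq, hpq⟩
        rcases Nat.lt_succ_iff_lt_or_eq.1 hq with hq | rfl
        · exact Or.inl ⟨q, hq, hpq⟩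
        · exact Or.inr hpq

/-- boolean test for `Extends (F i) u`, argument `(i, u)`. -/
def extB (F : ℕ → ℕ → ℕ) : ℕ × List ℕ → Bool :=
  fun p => Nat.rec true (fun q acc => acc && decide (F p.1 q = p.2.getD q 0)) p.2.length

lemma extB_iff (F : ℕ → ℕ → ℕ) (i : ℕ) (u : List ℕ) :
    extB F (i, u) = true ↔ Extends (F i) u := by
  have H := recAll (fun q => decide (F i q = u.getD q 0)) u.length
  constructor
  · intro hx
    intro j hj
    exact of_decide_eq_true (H.1 hx j hj)
  · intro hx
    exact H.2 fun q hq => decide_eq_true (hx q hq)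

lemma extB_comp (F : ℕ → ℕ → ℕ) (hF : Computable fun q : ℕ × ℕ => F q.1 q.2) :
    Computable (extB F) := by
  have h1 : Computable fun p : ℕ × List ℕ => p.2.length :=
    (Primrec.list_length.comp Primrec.snd).to_comp
  have h2 : Computable₂ fun (p : ℕ × List ℕ) (qa : ℕ × Bool) =>
      qa.2 && decide (F p.1 qa.1 = p.2.getD qa.1 0) := by
    have hFv : Computable fun x : (ℕ × List ℕ) × ℕ × Bool => F x.1.1 x.2.1 :=
      hF.comp ((Computable.fst.comp Computable.fst).pair (Computable.fst.comp Computable.snd))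
    have hgd : Computable fun x : (ℕ × List ℕ) × ℕ × Bool => x.1.2.getD x.2.1 0 :=
      ((Primrec.list_getD 0).to_comp).comp (Computable.snd.comp Computable.fst)
        (Computable.fst.comp Computable.snd)
    have hdec : Computable fun x : (ℕ × List ℕ) × ℕ × Bool =>
        decide (F x.1.1 x.2.1 = x.1.2.getD x.2.1 0) :=
      (Primrec.eq.decide.to_comp).comp hFv hgd
    exact (Computable.cond (Computable.snd.comp Computable.snd) hdec
      (Computable.const false)).of_eq fun x => by cases hx : x.2.2 <;> simp [hx]
  exact (Computable.nat_rec h1 (Computable.const true) h2).of_eq fun p => rfl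

/-- boolean test for `∃ j ≤ c, Extends (F j) u`, argument `(c, u)`. -/
def exB (F : ℕ → ℕ → ℕ) : ℕ × List ℕ → Bool :=
  fun p => Nat.rec false (fun j acc => acc || extB F (j, p.2)) (p.1 + 1)

lemma exB_iff (F : ℕ → ℕ → ℕ) (c : ℕ) (u : List ℕ) :
    exB F (c, u) = true ↔ ∃ j ≤ c, Extends (F j) u := by
  have H := recAny (fun j => extB F (j, u)) (c + 1)
  constructor
  · intro hx
    obtain ⟨j, hj, he⟩ := H.1 hx
    exact ⟨j, Nat.lt_succ_iff.1 hj, (extB_iff F j u).1 he⟩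
  · rintro ⟨j, hj, he⟩
    exact H.2 ⟨j, Nat.lt_succ_iff.2 hj, (extB_iff F j u).2 he⟩

lemma exB_comp (F : ℕ → ℕ → ℕ) (hF : Computable fun q : ℕ × ℕ => F q.1 q.2) :
    Computable (exB F) := by
  have h1 : Computable fun p : ℕ × List ℕ => p.1 + 1 :=
    (Primrec.succ.comp Primrec.fst).to_comp
  have h2 : Computable₂ fun (p : ℕ × List ℕ) (ja : ℕ × Bool) =>
      ja.2 || extB F (ja.1, p.2) := by
    have he : Computable fun x : (ℕ × List ℕ) × ℕ × Bool => extB F (x.2.1, x.1.2) :=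
      (extB_comp F hF).comp ((Computable.fst.comp Computable.snd).pair
        (Computable.snd.comp Computable.fst))
    exact (Computable.cond (Computable.snd.comp Computable.snd)
      (Computable.const true) he).of_eq fun x => by cases hx : x.2.2 <;> simp [hx]
  exact (Computable.nat_rec h1 (Computable.const false) h2).of_eq fun p => rfl

/-- computes `pref (F i) q`, argument `(i, q)`. -/
def prefF (F : ℕ → ℕ → ℕ) : ℕ × ℕ → List ℕ :=
  fun p => Nat.rec [] (fun q l => l ++ [F p.1 q]) p.2

lemma prefF_eq (F : ℕ → ℕ → ℕ) (i q : ℕ) : prefF F (i, q) = pref (F i) q := by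
  induction q with
  | zero => rfl
  | succ q ih =>
      show prefF F (i, q) ++ [F i q] = _
      rw [ih]
      simp [pref, List.range_succ]

lemma prefF_comp (F : ℕ → ℕ → ℕ) (hF : Computable fun q : ℕ × ℕ => F q.1 q.2) :
    Computable (prefF F) := by
  have h2 : Computable₂ fun (p : ℕ × ℕ) (ql : ℕ × List ℕ) => ql.2 ++ [F p.1 ql.1] := by
    have hFv : Computable fun x : (ℕ × ℕ) × ℕ × List ℕ => F x.1.1 x.2.1 :=
      hF.comp ((Computable.fst.comp Computable.fst).pair (Computable.fst.comp Computable.snd))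
    exact Computable.list_append.comp (Computable.snd.comp Computable.snd)
      ((Primrec.list_cons.to_comp).comp hFv (Computable.const []))
  exact (Computable.nat_rec Computable.snd (Computable.const []) h2).of_eq fun p => rfl

/-- The key fact about `KCv ≤ c`. -/
lemma KCv_le_iff (F : ℕ → ℕ → ℕ) (u : List ℕ) (c : ℕ) :
    KCv F u ≤ (c : ℕ∞) ↔ ∃ j ≤ c, Extends (F j) u := by
  constructor
  · intro hle
    by_contra hno
    push_neg at hno
    have hbig : ((c + 1 : ℕ) : ℕ∞) ≤ KCv F u := by
      apply le_sInf
      rintro x ⟨j, hj, rfl⟩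
      have hcj : c + 1 ≤ j := by
        by_contra h'
        push_neg at h'
        exact hno j (Nat.lt_succ_iff.1 h') hj
      show ((c + 1 : ℕ) : ℕ∞) ≤ (j : ℕ∞)
      exact_mod_cast hcj
    have : ((c + 1 : ℕ) : ℕ∞) ≤ (c : ℕ∞) := hbig.trans hle
    have : c + 1 ≤ c := by exact_mod_cast this
    omega
  · rintro ⟨j, hj, hx⟩
    calc KCv F u ≤ (j : ℕ∞) := sInf_le ⟨j, hx, rfl⟩
      _ ≤ (c : ℕ∞) := by exact_mod_cast hj

lemma extends_pref (f : ℕ → ℕ) (q : ℕ) : Extends f (pref f q) := by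
  intro j hj
  rw [List.getD_eq_getElem _ _ hj]
  simp [pref]

/-- if `A = 𝒞 ∩ ⋃_n ([v_n] ∩ A_{𝒞,h_n})` effectively, then `A` is
semi-decidable from `𝒞`-indices. -/
theorem stmt19 (F : ℕ → ℕ → ℕ) (hF : Computable fun q : ℕ × ℕ => F q.1 q.2)
    (b : List ℕ → ℕ) (hb : Computable b) (hbw : ∀ u, Extends (F (b u)) u)
    (v : ℕ → List ℕ) (hv : Computable v)
    (h : ℕ → ℕ → ℕ) (hh : Computable₂ h) (hmono : ∀ n, Monotone (h n))
    (m : ℕ → ℕ → ℕ) (hm : Computable₂ m) (hmod : ∀ n k, k ≤ h n (m n k))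
    (A : Set (ℕ → ℕ))
    (hA : ∀ f : ℕ → ℕ, f ∈ A ↔ ((∃ i, F i = f) ∧
      ∃ n, Extends f (v n) ∧ ∀ q, KCv F (pref f q) ≤ (h n q : ℕ∞))) :
    ∃ φ : ℕ →. Unit, Partrec φ ∧ ∀ i, (φ i).Dom ↔ F i ∈ A := by
  -- the decision function: given (i, n), decide whether F i witnesses membership via n
  set d : ℕ × ℕ → Bool := fun p =>
    extB F (p.1, v p.2) &&
      Nat.rec true (fun q acc => acc && exB F (h p.2 q, prefF F (p.1, q))) (m p.2 p.1) with hd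
  have hdc : Computable d := by
    have h1 : Computable fun p : ℕ × ℕ => extB F (p.1, v p.2) :=
      (extB_comp F hF).comp (Computable.fst.pair (hv.comp Computable.snd))
    have hrec : Computable fun p : ℕ × ℕ =>
        (Nat.rec true (fun q acc => acc && exB F (h p.2 q, prefF F (p.1, q)))
          (m p.2 p.1) : Bool) := by
      have hmf : Computable fun p : ℕ × ℕ => m p.2 p.1 :=
        hm.comp Computable.snd Computable.fst
      have hstep : Computable₂ fun (p : ℕ × ℕ) (qa : ℕ × Bool) =>
          qa.2 && exB F (h p.2 qa.1, prefF F (p.1, qa.1)) := by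
        have hhv : Computable fun x : (ℕ × ℕ) × ℕ × Bool => h x.1.2 x.2.1 :=
          hh.comp (Computable.snd.comp Computable.fst) (Computable.fst.comp Computable.snd)
        have hpv : Computable fun x : (ℕ × ℕ) × ℕ × Bool => prefF F (x.1.1, x.2.1) :=
          (prefF_comp F hF).comp ((Computable.fst.comp Computable.fst).pair
            (Computable.fst.comp Computable.snd))
        have hexv : Computable fun x : (ℕ × ℕ) × ℕ × Bool =>
            exB F (h x.1.2 x.2.1, prefF F (x.1.1, x.2.1)) :=
          (exB_comp F hF).comp (hhv.pair hpv)
        exact (Computable.cond (Computable.snd.comp Computable.snd) hexv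
          (Computable.const false)).of_eq fun x => by cases hx : x.2.2 <;> simp [hx]
      exact (Computable.nat_rec hmf (Computable.const true) hstep).of_eq fun p => rfl
    exact (Computable.cond h1 hrec (Computable.const false)).of_eq
      fun p => by cases hx : extB F (p.1, v p.2) <;> simp [hd, hx]
  -- correctness of the decision function
  have hdiff : ∀ i n, d (i, n) = true ↔
      Extends (F i) (v n) ∧ ∀ q, KCv F (pref (F i) q) ≤ (h n q : ℕ∞) := by
    intro i n
    have H := recAll (fun q => exB F (h n q, prefF F (i, q))) (m n i)
    rw [hd]
    simp only [Bool.and_eq_true]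
    constructor
    · rintro ⟨h1, h2⟩
      refine ⟨(extB_iff F i (v n)).1 h1, fun q => ?_⟩
      rcases lt_or_ge q (m n i) with hq | hq
      · have := H.1 h2 q hq
        rw [prefF_eq, exB_iff] at this
        exact (KCv_le_iff F _ _).2 this
      · have hle : (i : ℕ∞) ≤ (h n q : ℕ∞) := by
          exact_mod_cast (hmod n i).trans (hmono n hq)
        calc KCv F (pref (F i) q) ≤ (i : ℕ∞) := sInf_le ⟨i, extends_pref (F i) q, rfl⟩
          _ ≤ _ := hle
    · rintro ⟨h1, h2⟩
      refine ⟨(extB_iff F i (v n)).2 h1, H.2 fun q _ => ?_⟩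
      rw [prefF_eq, exB_iff]
      exact (KCv_le_iff F _ _).1 (h2 q)
  -- assemble the partial function
  refine ⟨fun i => (Nat.rfind fun n => Part.some (d (i, n))).map fun _ => (), ?_, ?_⟩
  · apply Partrec.map
    · exact Partrec.rfind ((hdc.comp (Computable.fst.pair Computable.snd)).partrec)
    · exact (Computable.const ()).to₂
  · intro i
    have hdom : ((Nat.rfind fun n => Part.some (d (i, n))).map fun _ => ()).Dom
        ↔ (Nat.rfind fun n => Part.some (d (i, n))).Dom := Iff.rfl
    rw [hdom]; refine Nat.rfind_dom.trans ?_
    constructor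
    · rintro ⟨n, hn, -⟩
      rw [hA]
      exact ⟨⟨i, rfl⟩, n, (hdiff i n).1 (Part.mem_some_iff.1 hn).symm⟩
    · intro hFA
      rw [hA] at hFA
      obtain ⟨-, n, hn⟩ := hFA
      exact ⟨n, Part.mem_some_iff.2 ((hdiff i n).2 hn).symm, fun {k} _ => trivial⟩
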